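/- arXiv:1006.1540 — 4 statements merged into one kernel-verified Lean document; each statement's English description precedes it below -/
import Mathlib

section
/- Let E₁,…,Eₙ be normed spaces over 𝕂, let β_n be a norm on T = E₁⊗⋯⊗Eₙ and β_{n+1} a norm on T⊗𝕂. Then the following are equivalent: (i) the canonical bijection ψ : (T⊗𝕂, β_{n+1}) → (T, β_n) is an isometric isomorphism; (ii) for every normed space F over 𝕂 and every (n+1)-linear map A : E₁×⋯×Eₙ×𝕂 → F, the linearization A_L is bounded with respect to β_{n+1} if and only if the linearization (A1)_L is bounded with respect to β_n, and in that case the two operator norms coincide. (This is the level-wise content of: a tensor norm β is smooth if and only if L_β has property [B].) -/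
open scoped TensorProduct
open PiTensorProduct

universe u

/-- The linearization `A_L : E₁ ⊗ ⋯ ⊗ Eₙ ⊗ 𝕜 → F` of an `(n+1)`-linear map
`A : E₁ × ⋯ × Eₙ × 𝕜 → F` (encoded in curried form as a multilinear map with values
in `𝕜 →ₗ[𝕜] F`). -/
noncomputable def linearizationFull {𝕜 : Type*} [RCLike 𝕜] {n : ℕ} {E : Fin n → Type*}
    [∀ i, NormedAddCommGroup (E i)] [∀ i, NormedSpace 𝕜 (E i)]
    {F : Type u} [NormedAddCommGroup F] [NormedSpace 𝕜 F]
    (A : MultilinearMap 𝕜 E (𝕜 →ₗ[𝕜] F)) : ((⨂[𝕜] i, E i) ⊗[𝕜] 𝕜) →ₗ[𝕜] F :=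
  TensorProduct.lift (PiTensorProduct.lift A)

/-- The `n`-linear map `A1 : E₁ × ⋯ × Eₙ → F`, `A1(x₁, …, xₙ) = A(x₁, …, xₙ, 1)`. -/
noncomputable def Aone {𝕜 : Type*} [RCLike 𝕜] {n : ℕ} {E : Fin n → Type*}
    [∀ i, NormedAddCommGroup (E i)] [∀ i, NormedSpace 𝕜 (E i)]
    {F : Type u} [NormedAddCommGroup F] [NormedSpace 𝕜 F]
    (A : MultilinearMap 𝕜 E (𝕜 →ₗ[𝕜] F)) : MultilinearMap 𝕜 E F :=
  (LinearMap.applyₗ (1 : 𝕜)).compMultilinearMap A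

/-- A copy of a type, used to carry a custom norm without clashing with existing instances. -/
def NormCopy (M : Type*) : Type _ := M

namespace NormCopy

instance {M : Type*} [AddCommGroup M] : AddCommGroup (NormCopy M) :=
  inferInstanceAs (AddCommGroup M)

instance {R M : Type*} [Semiring R] [AddCommGroup M] [Module R M] : Module R (NormCopy M) :=
  inferInstanceAs (Module R M)

/-- The canonical linear equivalence `M ≃ₗ[R] NormCopy M`. -/
def lequiv (R : Type*) {M : Type*} [Semiring R] [AddCommGroup M] [Module R M] :
    M ≃ₗ[R] NormCopy M where
  toFun := fun x => x
  invFun := fun x => x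
  map_add' := fun _ _ => rfl
  map_smul' := fun _ _ => rfl
  left_inv := fun _ => rfl
  right_inv := fun _ => rfl

end NormCopy

/-- Auxiliary: build a normed group structure on a module from a norm function. -/
noncomputable def normedAddCommGroupOfFn {M : Type*} [AddCommGroup M] (β : M → ℝ)
    (hdef : ∀ u, β u = 0 ↔ u = 0)
    (hneg : ∀ u, β (-u) = β u)
    (hadd : ∀ u v, β (u + v) ≤ β u + β v) : NormedAddCommGroup M :=
  AddGroupNorm.toNormedAddCommGroup
    { toFun := β
      map_zero' := (hdef 0).2 rfl
      add_le' := hadd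
      neg' := hneg
      eq_zero_of_map_eq_zero' := fun u h => (hdef u).1 h }

attribute [reducible] normedAddCommGroupOfFn

theorem lift_Aone_apply {𝕜 : Type*} [RCLike 𝕜] {n : ℕ} {E : Fin n → Type*}
    [∀ i, NormedAddCommGroup (E i)] [∀ i, NormedSpace 𝕜 (E i)]
    {F : Type u} [NormedAddCommGroup F] [NormedSpace 𝕜 F]
    (A : MultilinearMap 𝕜 E (𝕜 →ₗ[𝕜] F)) (u : ⨂[𝕜] i, E i) :
    PiTensorProduct.lift (Aone A) u = (PiTensorProduct.lift A u) 1 := by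
  induction u using PiTensorProduct.induction_on with
  | smul_tprod c x => simp [Aone]
  | add x y hx hy => simp [hx, hy]

theorem linearizationFull_eq {𝕜 : Type*} [RCLike 𝕜] {n : ℕ} {E : Fin n → Type*}
    [∀ i, NormedAddCommGroup (E i)] [∀ i, NormedSpace 𝕜 (E i)]
    {F : Type u} [NormedAddCommGroup F] [NormedSpace 𝕜 F]
    (A : MultilinearMap 𝕜 E (𝕜 →ₗ[𝕜] F)) (z : (⨂[𝕜] i, E i) ⊗[𝕜] 𝕜) :
    linearizationFull A z
      = PiTensorProduct.lift (Aone A) (TensorProduct.rid 𝕜 (⨂[𝕜] i, E i) z) := by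
  induction z using TensorProduct.induction_on with
  | zero => simp [linearizationFull]
  | tmul u c =>
      rw [linearizationFull, TensorProduct.lift.tmul, TensorProduct.rid_tmul, map_smul,
        lift_Aone_apply]
      rw [show c = c • (1 : 𝕜) by simp, map_smul]
      simp
  | add x y hx hy => simp [map_add, hx, hy]

/-- Auxiliary: a bound on an element from bounds by every member of a set. -/
theorem le_csInf_mul {S : Set ℝ} (hne : S.Nonempty) (a t : ℝ) (ht : 0 ≤ t)
    (h : ∀ C ∈ S, a ≤ C * t) : a ≤ sInf S * t := by
  rcases eq_or_lt_of_le ht with h0 | h0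
  · obtain ⟨C, hC⟩ := hne
    have := h C hC
    rw [← h0] at this ⊢
    simpa using this
  · have hdiv : ∀ C ∈ S, a / t ≤ C := fun C hC => (div_le_iff₀ h0).2 (h C hC)
    have := le_csInf hne hdiv
    calc a = a / t * t := by field_simp
    _ ≤ sInf S * t := mul_le_mul_of_nonneg_right this ht

set_option maxHeartbeats 1000000 in
/-- A tensor norm is smooth at level `n` if and only if the corresponding ideal
`L_β` has property [B] at level `n`: the canonical bijection
`ψ : (E₁ ⊗ ⋯ ⊗ Eₙ ⊗ 𝕜, β_{n+1}) → (E₁ ⊗ ⋯ ⊗ Eₙ, β_n)` is an isometric isomorphism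
iff for every normed space `F` and every `(n+1)`-linear `A : E₁ × ⋯ × Eₙ × 𝕜 → F`,
`A_L` is `β_{n+1}`-bounded iff `(A1)_L` is `β_n`-bounded, with equal operator norms. -/
theorem smooth_iff_propertyB {𝕜 : Type*} [RCLike 𝕜] {n : ℕ} (hn : 1 ≤ n)
    (E : Fin n → Type*) [∀ i, NormedAddCommGroup (E i)] [∀ i, NormedSpace 𝕜 (E i)]
    (βn : (⨂[𝕜] i, E i) → ℝ) (βn1 : ((⨂[𝕜] i, E i) ⊗[𝕜] 𝕜) → ℝ)
    (hβn_def : ∀ u, βn u = 0 ↔ u = 0)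
    (hβn_smul : ∀ (c : 𝕜) u, βn (c • u) = ‖c‖ * βn u)
    (hβn_add : ∀ u v, βn (u + v) ≤ βn u + βn v)
    (hβn1_def : ∀ z, βn1 z = 0 ↔ z = 0)
    (hβn1_smul : ∀ (c : 𝕜) z, βn1 (c • z) = ‖c‖ * βn1 z)
    (hβn1_add : ∀ z w, βn1 (z + w) ≤ βn1 z + βn1 w) :
    (∀ z, βn (TensorProduct.rid 𝕜 (⨂[𝕜] i, E i) z) = βn1 z) ↔
      (∀ (F : Type u) (_ : NormedAddCommGroup F) (_ : NormedSpace 𝕜 F)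
        (A : MultilinearMap 𝕜 E (𝕜 →ₗ[𝕜] F)),
        ((∃ C, 0 ≤ C ∧ ∀ z, ‖linearizationFull A z‖ ≤ C * βn1 z) ↔
          (∃ C, 0 ≤ C ∧ ∀ u, ‖PiTensorProduct.lift (Aone A) u‖ ≤ C * βn u)) ∧
        ((∃ C, 0 ≤ C ∧ ∀ z, ‖linearizationFull A z‖ ≤ C * βn1 z) →
          sInf {C | 0 ≤ C ∧ ∀ z, ‖linearizationFull A z‖ ≤ C * βn1 z}
            = sInf {C | 0 ≤ C ∧ ∀ u, ‖PiTensorProduct.lift (Aone A) u‖ ≤ C * βn u})) := by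
  set ρ := TensorProduct.rid 𝕜 (⨂[𝕜] i, E i) with hρ
  -- negation invariance
  have hβn_neg : ∀ v, βn (-v) = βn v := fun v => by
    have := hβn_smul (-1 : 𝕜) v; simpa using this
  have hβn1_neg : ∀ v, βn1 (-v) = βn1 v := fun v => by
    have := hβn1_smul (-1 : 𝕜) v; rw [show ((-1 : 𝕜) • v) = -v from neg_one_smul 𝕜 v] at this; simpa using this
  -- nonnegativity
  have hβn_nonneg : ∀ v, 0 ≤ βn v := fun v => by
    have h0 : βn 0 = 0 := (hβn_def 0).2 rfl
    have := hβn_add v (-v)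
    rw [add_neg_cancel, h0, hβn_neg] at this
    linarith
  have hβn1_nonneg : ∀ v, 0 ≤ βn1 v := fun v => by
    have h0 : βn1 0 = 0 := (hβn1_def 0).2 rfl
    have := hβn1_add v (-v)
    rw [add_neg_cancel, h0, hβn1_neg] at this
    linarith
  constructor
  · -- smoothness → property B
    intro hiso F _ _ A
    have hkey : ∀ C, (0 ≤ C ∧ ∀ z, ‖linearizationFull A z‖ ≤ C * βn1 z) ↔
        (0 ≤ C ∧ ∀ u, ‖PiTensorProduct.lift (Aone A) u‖ ≤ C * βn u) := by
      intro C
      constructor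
      · rintro ⟨h0, h⟩
        refine ⟨h0, fun v => ?_⟩
        have := h (ρ.symm v)
        rw [linearizationFull_eq, ← hiso (ρ.symm v)] at this
        simpa [hρ] using this
      · rintro ⟨h0, h⟩
        refine ⟨h0, fun z => ?_⟩
        have := h (ρ z)
        rw [← linearizationFull_eq, hiso z] at this
        exact this
    have hsets : {C | 0 ≤ C ∧ ∀ z, ‖linearizationFull A z‖ ≤ C * βn1 z}
        = {C | 0 ≤ C ∧ ∀ u, ‖PiTensorProduct.lift (Aone A) u‖ ≤ C * βn u} :=
      Set.ext fun C => hkey C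
    exact ⟨exists_congr hkey, fun _ => by rw [hsets]⟩
  · -- property B → smoothness
    intro hB
    -- a small model of 𝕜 in universe u
    haveI hsmall : Small.{u} 𝕜 :=
      small_of_injective (f := fun c : 𝕜 => (RCLike.re c, RCLike.im c))
        (fun a b h => by
          simp only [Prod.mk.injEq] at h
          exact RCLike.ext h.1 h.2)
    set e := (Shrink.linearEquiv 𝕜 𝕜).symm with he
    have hnorm_e : ∀ a : 𝕜, ‖e a‖ = ‖a‖ := fun a => by
      show ‖e.symm (e a)‖ = ‖a‖
      rw [LinearEquiv.symm_apply_apply]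
    -- Part (a): βn (ρ z) ≤ βn1 z
    have parta : ∀ z, βn (ρ z) ≤ βn1 z := by
      intro z
      by_cases hz : z = 0
      · subst hz
        simp only [map_zero]
        rw [(hβn_def 0).2 rfl, (hβn1_def 0).2 rfl]
      · letI nacg : NormedAddCommGroup (NormCopy (⨂[𝕜] i, E i)) :=
          normedAddCommGroupOfFn (M := NormCopy (⨂[𝕜] i, E i)) βn hβn_def hβn_neg hβn_add
        letI ns : NormedSpace 𝕜 (NormCopy (⨂[𝕜] i, E i)) :=
          ⟨fun c x => le_of_eq (hβn_smul c x)⟩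
        set ι := NormCopy.lequiv 𝕜 (M := (⨂[𝕜] i, E i)) with hι
        have hρz : ι (ρ z) ≠ 0 := fun h => hz (by
          have : ρ z = 0 := ι.injective (by simpa using h)
          simpa using congrArg ρ.symm this)
        obtain ⟨φ, hφ1, hφx⟩ := exists_dual_vector 𝕜 (ι (ρ z)) (norm_ne_zero_iff.mpr hρz)
        set ψφ : (⨂[𝕜] i, E i) →ₗ[𝕜] 𝕜 :=
          (φ : NormCopy (⨂[𝕜] i, E i) →ₗ[𝕜] 𝕜).comp ι.toLinearMap with hψφ
        have hψφ_bound : ∀ v, ‖ψφ v‖ ≤ 1 * βn v := by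
          intro v
          have := φ.le_opNorm (ι v)
          rwa [hφ1] at this
        have hψφ_val : ‖ψφ (ρ z)‖ = βn (ρ z) := by
          have : ψφ (ρ z) = φ (ι (ρ z)) := rfl
          rw [this, hφx]
          simp only [RCLike.norm_ofReal]
          exact abs_of_nonneg (norm_nonneg _)
        -- build the multilinear map A
        set Lmap : (⨂[𝕜] i, E i) →ₗ[𝕜] (𝕜 →ₗ[𝕜] Shrink.{u} 𝕜) :=
          ((LinearMap.ringLmapEquivSelf 𝕜 𝕜 (Shrink.{u} 𝕜)).symm.toLinearMap.comp
            (e.toLinearMap.comp ψφ)) with hLmap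
        set A : MultilinearMap 𝕜 E (𝕜 →ₗ[𝕜] Shrink.{u} 𝕜) :=
          Lmap.compMultilinearMap (PiTensorProduct.tprod 𝕜) with hA
        have hliftA : PiTensorProduct.lift A = Lmap := by
          rw [hA, ← PiTensorProduct.lift_symm, LinearEquiv.apply_symm_apply]
        have hAone : ∀ v : (⨂[𝕜] i, E i), PiTensorProduct.lift (Aone A) v = e (ψφ v) := by
          intro v
          rw [lift_Aone_apply, hliftA]
          simp [hLmap]
        have hfull : ∀ w, linearizationFull A w = e (ψφ (ρ w)) := by
          intro w
          rw [linearizationFull_eq, hAone]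
        obtain ⟨hiff, hinf⟩ := hB (Shrink.{u} 𝕜) _ _ A
        have hmemR : (1 : ℝ) ∈ {C | 0 ≤ C ∧ ∀ u, ‖PiTensorProduct.lift (Aone A) u‖ ≤ C * βn u} := by
          refine ⟨zero_le_one, fun v => ?_⟩
          rw [hAone, hnorm_e]
          exact hψφ_bound v
        have hexL := hiff.2 ⟨1, hmemR⟩
        have hinfeq := hinf hexL
        have hbound : ‖linearizationFull A z‖
            ≤ sInf {C | 0 ≤ C ∧ ∀ z, ‖linearizationFull A z‖ ≤ C * βn1 z} * βn1 z :=
          le_csInf_mul hexL _ _ (hβn1_nonneg z) (fun C hC => hC.2 z)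
        have hinfle : sInf {C | 0 ≤ C ∧ ∀ u, ‖PiTensorProduct.lift (Aone A) u‖ ≤ C * βn u}
            ≤ 1 :=
          csInf_le ⟨0, fun x hx => hx.1⟩ hmemR
        have hval : ‖linearizationFull A z‖ = βn (ρ z) := by
          rw [hfull, hnorm_e, hψφ_val]
        rw [hval, hinfeq] at hbound
        calc βn (ρ z) ≤ _ * βn1 z := hbound
        _ ≤ 1 * βn1 z := mul_le_mul_of_nonneg_right hinfle (hβn1_nonneg z)
        _ = βn1 z := one_mul _
    -- Part (b): βn1 z ≤ βn (ρ z)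
    have partb : ∀ z, βn1 z ≤ βn (ρ z) := by
      intro z
      by_cases hz : z = 0
      · subst hz
        simp only [map_zero]
        rw [(hβn_def 0).2 rfl, (hβn1_def 0).2 rfl]
      · letI nacg : NormedAddCommGroup (NormCopy ((⨂[𝕜] i, E i) ⊗[𝕜] 𝕜)) :=
          normedAddCommGroupOfFn (M := NormCopy ((⨂[𝕜] i, E i) ⊗[𝕜] 𝕜)) βn1
            hβn1_def hβn1_neg hβn1_add
        letI ns : NormedSpace 𝕜 (NormCopy ((⨂[𝕜] i, E i) ⊗[𝕜] 𝕜)) :=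
          ⟨fun c x => le_of_eq (hβn1_smul c x)⟩
        set ι := NormCopy.lequiv 𝕜 (M := (⨂[𝕜] i, E i) ⊗[𝕜] 𝕜) with hι
        have hz' : ι z ≠ 0 := fun h => hz (ι.injective (by simpa using h))
        obtain ⟨φ, hφ1, hφx⟩ := exists_dual_vector 𝕜 (ι z) (norm_ne_zero_iff.mpr hz')
        set ψφ : ((⨂[𝕜] i, E i) ⊗[𝕜] 𝕜) →ₗ[𝕜] 𝕜 :=
          (φ : NormCopy ((⨂[𝕜] i, E i) ⊗[𝕜] 𝕜) →ₗ[𝕜] 𝕜).comp ι.toLinearMap with hψφ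
        have hψφ_bound : ∀ w, ‖ψφ w‖ ≤ 1 * βn1 w := by
          intro w
          have := φ.le_opNorm (ι w)
          rwa [hφ1] at this
        have hψφ_val : ‖ψφ z‖ = βn1 z := by
          have : ψφ z = φ (ι z) := rfl
          rw [this, hφx]
          simp only [RCLike.norm_ofReal]
          exact abs_of_nonneg (norm_nonneg _)
        set Lmap : (⨂[𝕜] i, E i) →ₗ[𝕜] (𝕜 →ₗ[𝕜] Shrink.{u} 𝕜) :=
          TensorProduct.curry (e.toLinearMap.comp ψφ) with hLmap
        set A : MultilinearMap 𝕜 E (𝕜 →ₗ[𝕜] Shrink.{u} 𝕜) :=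
          Lmap.compMultilinearMap (PiTensorProduct.tprod 𝕜) with hA
        have hliftA : PiTensorProduct.lift A = Lmap := by
          rw [hA, ← PiTensorProduct.lift_symm, LinearEquiv.apply_symm_apply]
        have hfull : ∀ w, linearizationFull A w = e (ψφ w) := by
          intro w
          rw [linearizationFull]
          induction w using TensorProduct.induction_on with
          | zero => simp
          | tmul v c =>
              rw [TensorProduct.lift.tmul, hliftA, hLmap]
              rw [TensorProduct.curry_apply]
              rfl
          | add x y hx hy => simp [map_add, hx, hy]
        have hAone : ∀ v : (⨂[𝕜] i, E i),
            PiTensorProduct.lift (Aone A) v = e (ψφ (ρ.symm v)) := by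
          intro v
          have h1 := linearizationFull_eq A (ρ.symm v)
          rw [hfull, LinearEquiv.apply_symm_apply] at h1
          exact h1.symm
        obtain ⟨hiff, hinf⟩ := hB (Shrink.{u} 𝕜) _ _ A
        have hmemL : (1 : ℝ) ∈ {C | 0 ≤ C ∧ ∀ z, ‖linearizationFull A z‖ ≤ C * βn1 z} := by
          refine ⟨zero_le_one, fun w => ?_⟩
          rw [hfull, hnorm_e]
          exact hψφ_bound w
        have hexL : ∃ C, 0 ≤ C ∧ ∀ z, ‖linearizationFull A z‖ ≤ C * βn1 z := ⟨1, hmemL⟩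
        have hinfeq := hinf hexL
        have hexR := hiff.1 hexL
        have hbound : ‖PiTensorProduct.lift (Aone A) (ρ z)‖
            ≤ sInf {C | 0 ≤ C ∧ ∀ u, ‖PiTensorProduct.lift (Aone A) u‖ ≤ C * βn u} * βn (ρ z) :=
          le_csInf_mul hexR _ _ (hβn_nonneg (ρ z)) (fun C hC => hC.2 (ρ z))
        have hinfle : sInf {C | 0 ≤ C ∧ ∀ z, ‖linearizationFull A z‖ ≤ C * βn1 z} ≤ 1 :=
          csInf_le ⟨0, fun x hx => hx.1⟩ hmemL
        have hval : ‖PiTensorProduct.lift (Aone A) (ρ z)‖ = βn1 z := by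
          rw [hAone, LinearEquiv.symm_apply_apply, hnorm_e, hψφ_val]
        rw [hval, ← hinfeq] at hbound
        calc βn1 z ≤ _ * βn (ρ z) := hbound
        _ ≤ 1 * βn (ρ z) := mul_le_mul_of_nonneg_right hinfle (hβn_nonneg (ρ z))
        _ = βn (ρ z) := one_mul _
    exact fun z => le_antisymm (parta z) (partb z)
end

section
/- Let p ≥ 1 and let E₁,…,Eₙ be normed spaces over 𝕂. Then σ_p is a seminorm on E₁⊗⋯⊗Eₙ: σ_p(λu) = |λ|·σ_p(u) for all λ ∈ 𝕂 and σ_p(u+v) ≤ σ_p(u) + σ_p(v) for all u, v ∈ E₁⊗⋯⊗Eₙ. -/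
open scoped TensorProduct
open PiTensorProduct

/-- The `ℓ_q` norm of a finite family of scalars, where `q` is the conjugate exponent
of `p` (`1/p + 1/q = 1`, with `q = ∞`, i.e. the sup norm, when `p = 1`). -/
noncomputable def lqNorm {𝕜 : Type*} [RCLike 𝕜] (p : ℝ) {m : ℕ} (lam : Fin m → 𝕜) : ℝ :=
  if p = 1 then ⨆ j, ‖lam j‖ else (∑ j, ‖lam j‖ ^ (p / (p - 1))) ^ ((p - 1) / p)

/-- `sup_{‖φ_l‖ ≤ 1} Σ_j |φ₁(x_{1,j}) ⋯ φₙ(x_{n,j})|^p`. -/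
noncomputable def supTerm (𝕜 : Type*) [RCLike 𝕜] {n : ℕ} {E : Fin n → Type*}
    [∀ i, NormedAddCommGroup (E i)] [∀ i, NormedSpace 𝕜 (E i)]
    (p : ℝ) {m : ℕ} (x : Fin m → Π i, E i) : ℝ :=
  ⨆ φ : {φ : Π i, E i →L[𝕜] 𝕜 // ∀ i, ‖φ i‖ ≤ 1},
    ∑ j, (∏ i, ‖φ.1 i (x j i)‖) ^ p

/-- The tensor norm `σ_p` on `E₁ ⊗ ⋯ ⊗ Eₙ`. -/
noncomputable def sigmaNorm {𝕜 : Type*} [RCLike 𝕜] {n : ℕ} {E : Fin n → Type*}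
    [∀ i, NormedAddCommGroup (E i)] [∀ i, NormedSpace 𝕜 (E i)]
    (p : ℝ) (u : ⨂[𝕜] i, E i) : ℝ :=
  sInf { r : ℝ | ∃ (m : ℕ) (lam : Fin m → 𝕜) (x : Fin m → Π i, E i),
    u = (∑ j, lam j • ⨂ₜ[𝕜] i, x j i) ∧
    r = lqNorm p lam * (supTerm 𝕜 p x) ^ (1/p) }

section aux
variable {𝕜 : Type*} [RCLike 𝕜] {n : ℕ} {E : Fin n → Type*}
  [∀ i, NormedAddCommGroup (E i)] [∀ i, NormedSpace 𝕜 (E i)] {p : ℝ}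

/-- the family whose sup is `supTerm` -/
noncomputable def stF (𝕜 : Type*) [RCLike 𝕜] {n : ℕ} {E : Fin n → Type*}
    [∀ i, NormedAddCommGroup (E i)] [∀ i, NormedSpace 𝕜 (E i)]
    (p : ℝ) {m : ℕ} (x : Fin m → Π i, E i)
    (φ : {φ : Π i, E i →L[𝕜] 𝕜 // ∀ i, ‖φ i‖ ≤ 1}) : ℝ :=
  ∑ j, (∏ i, ‖φ.1 i (x j i)‖) ^ p

instance : Nonempty {φ : Π i, E i →L[𝕜] 𝕜 // ∀ i, ‖φ i‖ ≤ 1} :=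
  ⟨⟨fun _ => 0, fun i => by simp⟩⟩

lemma supTerm_eq {m : ℕ} (x : Fin m → Π i, E i) :
    supTerm 𝕜 p x = ⨆ φ, stF 𝕜 p x φ := rfl

lemma stF_nonneg (hp : 0 < p) {m : ℕ} (x : Fin m → Π i, E i) (φ) :
    0 ≤ stF 𝕜 p x φ :=
  Finset.sum_nonneg fun j _ => Real.rpow_nonneg (Finset.prod_nonneg fun i _ => norm_nonneg _) _

lemma stF_le (hp : 0 < p) {m : ℕ} (x : Fin m → Π i, E i) (φ) :
    stF 𝕜 p x φ ≤ ∑ j, (∏ i, ‖x j i‖) ^ p := by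
  refine Finset.sum_le_sum fun j _ => ?_
  refine Real.rpow_le_rpow (Finset.prod_nonneg fun i _ => norm_nonneg _) ?_ hp.le
  refine Finset.prod_le_prod (fun i _ => norm_nonneg _) fun i _ => ?_
  calc ‖φ.1 i (x j i)‖ ≤ ‖φ.1 i‖ * ‖x j i‖ := (φ.1 i).le_opNorm _
  _ ≤ 1 * ‖x j i‖ := by gcongr; exact φ.2 i
  _ = ‖x j i‖ := one_mul _

lemma bddAbove_stF (hp : 0 < p) {m : ℕ} (x : Fin m → Π i, E i) :
    BddAbove (Set.range (stF 𝕜 p x)) :=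
  ⟨∑ j, (∏ i, ‖x j i‖) ^ p, by rintro r ⟨φ, rfl⟩; exact stF_le hp x φ⟩

lemma stF_le_supTerm (hp : 0 < p) {m : ℕ} (x : Fin m → Π i, E i) (φ) :
    stF 𝕜 p x φ ≤ supTerm 𝕜 p x :=
  le_ciSup (bddAbove_stF hp x) φ

lemma supTerm_nonneg (hp : 0 < p) {m : ℕ} (x : Fin m → Π i, E i) :
    0 ≤ supTerm 𝕜 p x :=
  Real.iSup_nonneg (stF_nonneg hp x)

lemma supTerm_le (hp : 0 < p) {m : ℕ} (x : Fin m → Π i, E i) {C : ℝ}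
    (h : ∀ φ, stF 𝕜 p x φ ≤ C) : supTerm 𝕜 p x ≤ C :=
  ciSup_le h

lemma supTerm_append (hp : 0 < p) {m₁ m₂ : ℕ} (x : Fin m₁ → Π i, E i)
    (y : Fin m₂ → Π i, E i) :
    supTerm 𝕜 p (Fin.append x y) ≤ supTerm 𝕜 p x + supTerm 𝕜 p y := by
  refine supTerm_le hp _ fun φ => ?_
  have : stF 𝕜 p (Fin.append x y) φ = stF 𝕜 p x φ + stF 𝕜 p y φ := by
    simp only [stF, Fin.sum_univ_add, Fin.append_left, Fin.append_right]
  rw [this]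
  exact add_le_add (stF_le_supTerm hp x φ) (stF_le_supTerm hp y φ)
end aux

section aux2
variable {𝕜 : Type*} [RCLike 𝕜] {n : ℕ} {E : Fin n → Type*}
  [∀ i, NormedAddCommGroup (E i)] [∀ i, NormedSpace 𝕜 (E i)] {p : ℝ}

lemma prod_update_norm (i0 : Fin n) (c : 𝕜) (φ : Π i, E i →L[𝕜] 𝕜) (x : Π i, E i) :
    (∏ i, ‖φ i (Function.update x i0 (c • x i0) i)‖) = ‖c‖ * ∏ i, ‖φ i (x i)‖ := by
  have h : (fun i => ‖φ i (Function.update x i0 (c • x i0) i)‖)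
      = Function.update (fun i => ‖φ i (x i)‖) i0 (‖c‖ * ‖φ i0 (x i0)‖) := by
    funext i
    rcases eq_or_ne i i0 with rfl | hi
    · simp [Function.update_self, map_smul, norm_smul]
    · simp [Function.update_of_ne hi]
  rw [h, Finset.prod_update_of_mem (Finset.mem_univ i0), mul_assoc]
  congr 1
  exact (Finset.prod_eq_mul_prod_sdiff_singleton_of_mem (Finset.mem_univ i0)
    (fun i => ‖φ i (x i)‖)).symm

lemma stF_update_smul (hp : 0 < p) (i0 : Fin n) (c : 𝕜) {m : ℕ} (x : Fin m → Π i, E i) (φ) :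
    stF 𝕜 p (fun j => Function.update (x j) i0 (c • x j i0)) φ = ‖c‖ ^ p * stF 𝕜 p x φ := by
  simp only [stF, prod_update_norm]
  rw [Finset.mul_sum]
  refine Finset.sum_congr rfl fun j _ => ?_
  rw [Real.mul_rpow (norm_nonneg c) (Finset.prod_nonneg fun i _ => norm_nonneg _)]

lemma supTerm_update_smul (hp : 0 < p) (i0 : Fin n) (c : 𝕜) {m : ℕ} (x : Fin m → Π i, E i) :
    supTerm 𝕜 p (fun j => Function.update (x j) i0 (c • x j i0)) = ‖c‖ ^ p * supTerm 𝕜 p x := by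
  rw [supTerm_eq, supTerm_eq, Real.mul_iSup_of_nonneg (Real.rpow_nonneg (norm_nonneg c) p)]
  exact iSup_congr (stF_update_smul hp i0 c x)

lemma tprod_update_smul (i0 : Fin n) (c : 𝕜) (x : Π i, E i) :
    (⨂ₜ[𝕜] i, Function.update x i0 (c • x i0) i) = c • ⨂ₜ[𝕜] i, x i := by
  have := MultilinearMap.map_update_smul (PiTensorProduct.tprod 𝕜) x i0 c (x i0)
  rwa [Function.update_eq_self] at this

end aux2

section lq
variable {𝕜 : Type*} [RCLike 𝕜] {p : ℝ}

lemma lqNorm_nonneg (hp : 1 ≤ p) {m : ℕ} (lam : Fin m → 𝕜) : 0 ≤ lqNorm p lam := by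
  unfold lqNorm
  split_ifs with h
  · exact Real.iSup_nonneg fun j => norm_nonneg _
  · exact Real.rpow_nonneg (Finset.sum_nonneg fun j _ => Real.rpow_nonneg (norm_nonneg _) _) _

lemma lqNorm_empty (hp : 1 ≤ p) (lam : Fin 0 → 𝕜) : lqNorm p lam = 0 := by
  unfold lqNorm
  split_ifs with h
  · exact Real.iSup_of_isEmpty _
  · have hp1 : 1 < p := lt_of_le_of_ne hp (Ne.symm h)
    rw [Finset.univ_eq_empty, Finset.sum_empty, Real.zero_rpow]
    exact ne_of_gt (div_pos (by linarith) (by linarith))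

lemma lqNorm_smul (hp : 1 ≤ p) (c : 𝕜) {m : ℕ} (lam : Fin m → 𝕜) :
    lqNorm p (fun j => c * lam j) = ‖c‖ * lqNorm p lam := by
  unfold lqNorm
  split_ifs with h
  · rw [Real.mul_iSup_of_nonneg (norm_nonneg c)]
    exact iSup_congr fun j => norm_mul c (lam j)
  · have hp1 : 1 < p := lt_of_le_of_ne hp (Ne.symm h)
    have hpm : 0 < p - 1 := by linarith
    have h1 : ∀ j : Fin m, ‖c * lam j‖ ^ (p/(p-1)) = ‖c‖^(p/(p-1)) * ‖lam j‖^(p/(p-1)) :=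
      fun j => by rw [norm_mul, Real.mul_rpow (norm_nonneg _) (norm_nonneg _)]
    simp only [h1]
    rw [← Finset.mul_sum, Real.mul_rpow (Real.rpow_nonneg (norm_nonneg _) _)
      (Finset.sum_nonneg fun j _ => Real.rpow_nonneg (norm_nonneg _) _),
      ← Real.rpow_mul (norm_nonneg c)]
    have he : (p/(p-1)) * ((p-1)/p) = 1 := by field_simp
    rw [he, Real.rpow_one]

lemma eq_zero_of_lqNorm_eq_zero (hp : 1 ≤ p) {m : ℕ} {lam : Fin m → 𝕜}
    (h : lqNorm p lam = 0) : ∀ j, lam j = 0 := by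
  intro j
  unfold lqNorm at h
  split_ifs at h with h1
  · have hle : ‖lam j‖ ≤ ⨆ j, ‖lam j‖ :=
      le_ciSup (f := fun j => ‖lam j‖) (Set.Finite.bddAbove (Set.finite_range _)) j
    rw [h] at hle
    simpa using le_antisymm hle (norm_nonneg _)
  · have hp1 : 1 < p := lt_of_le_of_ne hp (Ne.symm h1)
    have hq : (0:ℝ) < p / (p-1) := by
      apply div_pos <;> linarith
    have he : (0:ℝ) < (p-1)/p := by apply div_pos <;> linarith
    have hsum : (∑ j, ‖lam j‖ ^ (p/(p-1))) = 0 := by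
      rcases (Real.rpow_eq_zero_iff_of_nonneg
        (Finset.sum_nonneg fun j _ => Real.rpow_nonneg (norm_nonneg _) _)).mp h with ⟨h2, _⟩
      exact h2
    have := (Finset.sum_eq_zero_iff_of_nonneg
      (fun j _ => Real.rpow_nonneg (norm_nonneg (lam j)) _)).mp hsum j (Finset.mem_univ j)
    rcases (Real.rpow_eq_zero_iff_of_nonneg (norm_nonneg _)).mp this with ⟨h3, _⟩
    simpa using h3

end lq

section sigma
variable {𝕜 : Type*} [RCLike 𝕜] {n : ℕ} {E : Fin n → Type*}
  [∀ i, NormedAddCommGroup (E i)] [∀ i, NormedSpace 𝕜 (E i)] {p : ℝ}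

def repSet (p : ℝ) (u : ⨂[𝕜] i, E i) : Set ℝ :=
  { r : ℝ | ∃ (m : ℕ) (lam : Fin m → 𝕜) (x : Fin m → Π i, E i),
    u = (∑ j, lam j • ⨂ₜ[𝕜] i, x j i) ∧
    r = lqNorm p lam * (supTerm 𝕜 p x) ^ (1/p) }

lemma sigmaNorm_def (u : ⨂[𝕜] i, E i) : sigmaNorm p u = sInf (repSet p u) := rfl

lemma sum_append_tensor {m₁ m₂ : ℕ} (lam : Fin m₁ → 𝕜) (mu : Fin m₂ → 𝕜)
    (x : Fin m₁ → Π i, E i) (y : Fin m₂ → Π i, E i) :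
    (∑ j : Fin (m₁ + m₂), Fin.append lam mu j • ⨂ₜ[𝕜] i, Fin.append x y j i)
      = (∑ j, lam j • ⨂ₜ[𝕜] i, x j i) + ∑ j, mu j • ⨂ₜ[𝕜] i, y j i := by
  rw [Fin.sum_univ_add]
  simp [Fin.append_left, Fin.append_right]

lemma exists_rep (u : ⨂[𝕜] i, E i) :
    ∃ (m : ℕ) (lam : Fin m → 𝕜) (x : Fin m → Π i, E i),
      u = (∑ j, lam j • ⨂ₜ[𝕜] i, x j i) := by
  induction u using PiTensorProduct.induction_on with
  | smul_tprod r f =>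
    exact ⟨1, fun _ => r, fun _ => f, by simp⟩
  | add u v hu hv =>
    obtain ⟨m₁, lam, x, rfl⟩ := hu
    obtain ⟨m₂, mu, y, rfl⟩ := hv
    exact ⟨m₁ + m₂, Fin.append lam mu, Fin.append x y, (sum_append_tensor lam mu x y).symm⟩

lemma repSet_nonneg (hp : 1 ≤ p) (u : ⨂[𝕜] i, E i) : ∀ r ∈ repSet p u, (0:ℝ) ≤ r := by
  rintro r ⟨m, lam, x, -, rfl⟩
  exact mul_nonneg (lqNorm_nonneg hp lam)
    (Real.rpow_nonneg (supTerm_nonneg (by linarith) x) _)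

lemma repSet_nonempty (hp : 1 ≤ p) (u : ⨂[𝕜] i, E i) : (repSet p u).Nonempty := by
  obtain ⟨m, lam, x, h⟩ := exists_rep u
  exact ⟨_, m, lam, x, h, rfl⟩

lemma bddBelow_repSet (hp : 1 ≤ p) (u : ⨂[𝕜] i, E i) : BddBelow (repSet p u) :=
  ⟨0, fun r hr => repSet_nonneg hp u r hr⟩

lemma sigmaNorm_le_of_mem (hp : 1 ≤ p) {u : ⨂[𝕜] i, E i} {r : ℝ} (hr : r ∈ repSet p u) :
    sigmaNorm p u ≤ r :=
  csInf_le (bddBelow_repSet hp u) hr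

lemma sigmaNorm_nonneg (hp : 1 ≤ p) (u : ⨂[𝕜] i, E i) : 0 ≤ sigmaNorm p u :=
  le_csInf (repSet_nonempty hp u) (repSet_nonneg hp u)

end sigma

open scoped Pointwise
section homog
variable {𝕜 : Type*} [RCLike 𝕜] {n : ℕ} {E : Fin n → Type*}
  [∀ i, NormedAddCommGroup (E i)] [∀ i, NormedSpace 𝕜 (E i)] {p : ℝ}

lemma zero_mem_repSet_zero (hp : 1 ≤ p) : (0:ℝ) ∈ repSet (𝕜 := 𝕜) (E := E) p 0 :=
  ⟨0, Fin.elim0, Fin.elim0, by simp, by rw [lqNorm_empty hp, zero_mul]⟩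

lemma sigmaNorm_zero (hp : 1 ≤ p) : sigmaNorm (𝕜 := 𝕜) (E := E) p 0 = 0 :=
  le_antisymm (sigmaNorm_le_of_mem hp (zero_mem_repSet_zero hp)) (sigmaNorm_nonneg hp 0)

lemma repSet_smul (hp : 1 ≤ p) {c : 𝕜} (hc : c ≠ 0) (u : ⨂[𝕜] i, E i) :
    repSet p (c • u) = ‖c‖ • repSet p u := by
  have hcn : ‖c‖ ≠ 0 := norm_ne_zero_iff.mpr hc
  ext r
  constructor
  · rintro ⟨m, lam, x, heq, rfl⟩
    refine ⟨‖c‖⁻¹ * (lqNorm p lam * supTerm 𝕜 p x ^ (1/p)),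
      ⟨m, fun j => c⁻¹ * lam j, x, ?_, ?_⟩, ?_⟩
    · calc u = c⁻¹ • (c • u) := by rw [smul_smul, inv_mul_cancel₀ hc, one_smul]
      _ = ∑ j, (c⁻¹ * lam j) • ⨂ₜ[𝕜] i, x j i := by
          rw [heq, Finset.smul_sum]
          exact Finset.sum_congr rfl fun j _ => smul_smul _ _ _
    · rw [lqNorm_smul hp, norm_inv, mul_assoc]
    · simp only [smul_eq_mul]
      rw [← mul_assoc, mul_inv_cancel₀ hcn, one_mul]
  · rintro ⟨r', ⟨m, lam, x, heq, rfl⟩, rfl⟩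
    refine ⟨m, fun j => c * lam j, x, ?_, ?_⟩
    · rw [heq, Finset.smul_sum]
      exact Finset.sum_congr rfl fun j _ => smul_smul _ _ _
    · simp only [smul_eq_mul]
      rw [lqNorm_smul hp, mul_assoc]

lemma sigmaNorm_smul (hp : 1 ≤ p) (c : 𝕜) (u : ⨂[𝕜] i, E i) :
    sigmaNorm p (c • u) = ‖c‖ * sigmaNorm p u := by
  rcases eq_or_ne c 0 with rfl | hc
  · rw [zero_smul, sigmaNorm_zero hp, norm_zero, zero_mul]
  · rw [sigmaNorm_def, sigmaNorm_def, repSet_smul hp hc,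
      Real.sInf_smul_of_nonneg (norm_nonneg c), smul_eq_mul]

end homog

section tri
variable {𝕜 : Type*} [RCLike 𝕜] {n : ℕ} {E : Fin n → Type*}
  [∀ i, NormedAddCommGroup (E i)] [∀ i, NormedSpace 𝕜 (E i)] {p : ℝ}

lemma scaled_sum_eq (i0 : Fin n) {t : ℝ} (ht : t ≠ 0) {m : ℕ} (lam : Fin m → 𝕜)
    (x : Fin m → Π i, E i) :
    (∑ j, ((t:𝕜) * lam j) • ⨂ₜ[𝕜] i, Function.update (x j) i0 ((t:𝕜)⁻¹ • x j i0) i)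
      = ∑ j, lam j • ⨂ₜ[𝕜] i, x j i := by
  refine Finset.sum_congr rfl fun j _ => ?_
  rw [tprod_update_smul, smul_smul, mul_comm ((t:𝕜)) (lam j), mul_assoc,
    mul_inv_cancel₀ (by exact_mod_cast RCLike.ofReal_ne_zero.mpr ht), mul_one]

lemma norm_ofReal_inv_rpow {t : ℝ} (ht : 0 < t) (p : ℝ) :
    ‖((t:𝕜))⁻¹‖ ^ p = (t⁻¹) ^ p := by
  rw [norm_inv, RCLike.norm_ofReal, abs_of_pos ht]

lemma sigmaNorm_add_le_of_reps (hn : 0 < n) (hp : 1 ≤ p)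
    {u v : ⨂[𝕜] i, E i} {m₁ m₂ : ℕ} {lam : Fin m₁ → 𝕜} {x : Fin m₁ → Π i, E i}
    {mu : Fin m₂ → 𝕜} {y : Fin m₂ → Π i, E i}
    (hu : u = ∑ j, lam j • ⨂ₜ[𝕜] i, x j i) (hv : v = ∑ j, mu j • ⨂ₜ[𝕜] i, y j i)
    {t₁ t₂ : ℝ} (ht₁ : 0 < t₁) (ht₂ : 0 < t₂) :
    sigmaNorm p (u + v) ≤
      lqNorm p (Fin.append (fun j => (t₁:𝕜) * lam j) (fun j => (t₂:𝕜) * mu j)) *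
        ((t₁⁻¹) ^ p * supTerm 𝕜 p x + (t₂⁻¹) ^ p * supTerm 𝕜 p y) ^ (1/p) := by
  have hp0 : (0:ℝ) < p := by linarith
  set i0 : Fin n := ⟨0, hn⟩
  set x' : Fin m₁ → Π i, E i := fun j => Function.update (x j) i0 ((t₁:𝕜)⁻¹ • x j i0)
    with hx'
  set y' : Fin m₂ → Π i, E i := fun j => Function.update (y j) i0 ((t₂:𝕜)⁻¹ • y j i0)
    with hy'
  have hmem : lqNorm p (Fin.append (fun j => (t₁:𝕜) * lam j) (fun j => (t₂:𝕜) * mu j)) *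
      (supTerm 𝕜 p (Fin.append x' y')) ^ (1/p) ∈ repSet p (u + v) := by
    refine ⟨m₁ + m₂, _, _, ?_, rfl⟩
    rw [sum_append_tensor, scaled_sum_eq i0 (ne_of_gt ht₁) lam x,
      scaled_sum_eq i0 (ne_of_gt ht₂) mu y, hu, hv]
  refine le_trans (sigmaNorm_le_of_mem hp hmem) ?_
  refine mul_le_mul_of_nonneg_left ?_ (lqNorm_nonneg hp _)
  refine Real.rpow_le_rpow (supTerm_nonneg hp0 _) ?_ (by positivity)
  refine le_trans (supTerm_append hp0 x' y') ?_
  rw [hx', hy', supTerm_update_smul hp0, supTerm_update_smul hp0,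
    norm_ofReal_inv_rpow ht₁, norm_ofReal_inv_rpow ht₂]

end tri

section tri2
variable {𝕜 : Type*} [RCLike 𝕜] {n : ℕ} {E : Fin n → Type*}
  [∀ i, NormedAddCommGroup (E i)] [∀ i, NormedSpace 𝕜 (E i)] {p : ℝ}

lemma pos_of_lqNorm_pos {m : ℕ} {lam : Fin m → 𝕜} (hp : 1 ≤ p)
    (h : 0 < lqNorm p lam) : 0 < m := by
  rcases Nat.eq_zero_or_pos m with hm | hm
  · subst hm
    rw [lqNorm_empty hp] at h
    exact absurd h (lt_irrefl 0)
  · exact hm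

lemma lqNorm_one {m : ℕ} (lam : Fin m → 𝕜) : lqNorm (1:ℝ) lam = ⨆ j, ‖lam j‖ := by
  unfold lqNorm; rw [if_pos rfl]

lemma key_case_p1 (hn : 0 < n)
    {u v : ⨂[𝕜] i, E i} {m₁ m₂ : ℕ} {lam : Fin m₁ → 𝕜} {x : Fin m₁ → Π i, E i}
    {mu : Fin m₂ → 𝕜} {y : Fin m₂ → Π i, E i}
    (hu : u = ∑ j, lam j • ⨂ₜ[𝕜] i, x j i) (hv : v = ∑ j, mu j • ⨂ₜ[𝕜] i, y j i)
    (hL₁ : 0 < lqNorm (1:ℝ) lam) (hL₂ : 0 < lqNorm (1:ℝ) mu) :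
    sigmaNorm 1 (u + v) ≤ lqNorm 1 lam * supTerm 𝕜 1 x ^ (1/(1:ℝ))
      + lqNorm 1 mu * supTerm 𝕜 1 y ^ (1/(1:ℝ)) := by
  set L₁ := lqNorm (1:ℝ) lam
  set L₂ := lqNorm (1:ℝ) mu
  have ht₁ : (0:ℝ) < L₁⁻¹ := inv_pos.mpr hL₁
  have ht₂ : (0:ℝ) < L₂⁻¹ := inv_pos.mpr hL₂
  have hstep := sigmaNorm_add_le_of_reps hn le_rfl hu hv ht₁ ht₂
  have hm₁ : 0 < m₁ := pos_of_lqNorm_pos le_rfl hL₁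
  haveI : Nonempty (Fin (m₁ + m₂)) := ⟨⟨0, by omega⟩⟩
  -- bound the lq norm of the appended family by 1
  have hlq : lqNorm (1:ℝ) (Fin.append (fun j => ((L₁⁻¹ : ℝ):𝕜) * lam j)
      (fun j => ((L₂⁻¹ : ℝ):𝕜) * mu j)) ≤ 1 := by
    rw [lqNorm_one]
    refine ciSup_le fun j => ?_
    refine Fin.addCases (fun j => ?_) (fun j => ?_) j
    · rw [Fin.append_left, norm_mul, RCLike.norm_ofReal, abs_of_pos ht₁]
      have : ‖lam j‖ ≤ L₁ := by
        rw [show L₁ = ⨆ j, ‖lam j‖ from lqNorm_one lam]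
        exact le_ciSup (f := fun j => ‖lam j‖) (Set.Finite.bddAbove (Set.finite_range _)) j
      calc L₁⁻¹ * ‖lam j‖ ≤ L₁⁻¹ * L₁ := by gcongr
      _ = 1 := inv_mul_cancel₀ (ne_of_gt hL₁)
    · rw [Fin.append_right, norm_mul, RCLike.norm_ofReal, abs_of_pos ht₂]
      have : ‖mu j‖ ≤ L₂ := by
        rw [show L₂ = ⨆ j, ‖mu j‖ from lqNorm_one mu]
        exact le_ciSup (f := fun j => ‖mu j‖) (Set.Finite.bddAbove (Set.finite_range _)) j
      calc L₂⁻¹ * ‖mu j‖ ≤ L₂⁻¹ * L₂ := by gcongr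
      _ = 1 := inv_mul_cancel₀ (ne_of_gt hL₂)
  have hT₁ : 0 ≤ supTerm 𝕜 (1:ℝ) x := supTerm_nonneg one_pos x
  have hT₂ : 0 ≤ supTerm 𝕜 (1:ℝ) y := supTerm_nonneg one_pos y
  refine le_trans hstep ?_
  rw [inv_inv, inv_inv]
  have h1 : (1:ℝ)/1 = 1 := by norm_num
  rw [h1, Real.rpow_one, Real.rpow_one, Real.rpow_one, Real.rpow_one, Real.rpow_one]
  calc lqNorm 1 (Fin.append (fun j => ((L₁⁻¹ : ℝ):𝕜) * lam j) (fun j => ((L₂⁻¹ : ℝ):𝕜) * mu j))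
        * (L₁ * supTerm 𝕜 1 x + L₂ * supTerm 𝕜 1 y)
      ≤ 1 * (L₁ * supTerm 𝕜 1 x + L₂ * supTerm 𝕜 1 y) := by
        refine mul_le_mul_of_nonneg_right hlq ?_
        have h1' := hL₁.le; have h2' := hL₂.le
        positivity
  _ = L₁ * supTerm 𝕜 1 x + L₂ * supTerm 𝕜 1 y := one_mul _

end tri2

section tri3
variable {𝕜 : Type*} [RCLike 𝕜] {n : ℕ} {E : Fin n → Type*}
  [∀ i, NormedAddCommGroup (E i)] [∀ i, NormedSpace 𝕜 (E i)] {p : ℝ}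

lemma rpow_aux1 {p L S : ℝ} (hp1 : 1 < p) (hL : 0 < L) (hS : 0 < S) :
    ((S ^ ((p-1)/p) * L ^ (-(1/p))) ^ (p/(p-1))) * L ^ (p/(p-1)) = S * L := by
  have hp0 : 0 < p := by linarith
  have hpm : 0 < p - 1 := by linarith
  rw [Real.mul_rpow (Real.rpow_nonneg hS.le _) (Real.rpow_nonneg hL.le _),
    ← Real.rpow_mul hS.le, ← Real.rpow_mul hL.le, mul_assoc, ← Real.rpow_add hL]
  have h1 : (p-1)/p * (p/(p-1)) = 1 := by field_simp
  have h2 : (-(1/p)) * (p/(p-1)) + p/(p-1) = 1 := by field_simp; ring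
  rw [h1, h2, Real.rpow_one, Real.rpow_one]

lemma rpow_aux2 {p L S T : ℝ} (hp1 : 1 < p) (hL : 0 < L) (hS : 0 < S) (hT : 0 ≤ T)
    (hTle : T ≤ S ^ p) :
    ((S ^ ((p-1)/p) * L ^ (-(1/p)))⁻¹) ^ p * T ≤ S * L := by
  have hp0 : 0 < p := by linarith
  have hpm : 0 < p - 1 := by linarith
  have hSe : (0:ℝ) < S ^ ((p-1)/p) := Real.rpow_pos_of_pos hS _
  have hLe : (0:ℝ) < L ^ (-(1/p)) := Real.rpow_pos_of_pos hL _
  have hstep : ((S ^ ((p-1)/p) * L ^ (-(1/p)))⁻¹) ^ p = (S ^ (p-1))⁻¹ * L := by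
    rw [Real.inv_rpow (by positivity), Real.mul_rpow hSe.le hLe.le,
      ← Real.rpow_mul hS.le, ← Real.rpow_mul hL.le]
    have h1 : (p-1)/p * p = p - 1 := by field_simp
    have h2 : (-(1/p)) * p = -1 := by field_simp
    rw [h1, h2, Real.rpow_neg_one, mul_inv, inv_inv]
  rw [hstep]
  have hSp : (0:ℝ) < S ^ (p-1) := Real.rpow_pos_of_pos hS _
  calc (S ^ (p-1))⁻¹ * L * T ≤ (S ^ (p-1))⁻¹ * L * (S ^ p) := by
        have : (0:ℝ) ≤ (S ^ (p-1))⁻¹ * L := by positivity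
        exact mul_le_mul_of_nonneg_left hTle this
  _ = S * L := by
        rw [show (p:ℝ) = (p-1) + 1 by ring, Real.rpow_add_one (ne_of_gt hS)]
        field_simp
        ring

lemma lqNorm_pgt1 (hp1 : 1 < p) {m : ℕ} (a : Fin m → 𝕜) :
    lqNorm p a = (∑ j, ‖a j‖ ^ (p/(p-1))) ^ ((p-1)/p) := by
  unfold lqNorm; rw [if_neg hp1.ne']

lemma lq_pow_q (hp1 : 1 < p) {m : ℕ} (a : Fin m → 𝕜) :
    (lqNorm p a) ^ (p/(p-1)) = ∑ j, ‖a j‖ ^ (p/(p-1)) := by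
  have hp0 : 0 < p := by linarith
  have hpm : 0 < p - 1 := by linarith
  rw [lqNorm_pgt1 hp1, ← Real.rpow_mul
    (Finset.sum_nonneg fun j _ => Real.rpow_nonneg (norm_nonneg _) _)]
  rw [show (p-1)/p * (p/(p-1)) = 1 by field_simp, Real.rpow_one]

lemma key_case_pgt1 (hn : 0 < n) (hp1 : 1 < p)
    {u v : ⨂[𝕜] i, E i} {m₁ m₂ : ℕ} {lam : Fin m₁ → 𝕜} {x : Fin m₁ → Π i, E i}
    {mu : Fin m₂ → 𝕜} {y : Fin m₂ → Π i, E i}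
    (hu : u = ∑ j, lam j • ⨂ₜ[𝕜] i, x j i) (hv : v = ∑ j, mu j • ⨂ₜ[𝕜] i, y j i)
    (hL₁ : 0 < lqNorm p lam) (hL₂ : 0 < lqNorm p mu)
    {ε : ℝ} (hε : 0 < ε) :
    sigmaNorm p (u + v) ≤ lqNorm p lam * supTerm 𝕜 p x ^ (1/p)
      + lqNorm p mu * supTerm 𝕜 p y ^ (1/p) + ε := by
  have hp : 1 ≤ p := hp1.le
  have hp0 : 0 < p := by linarith
  have hpm : 0 < p - 1 := by linarith
  set L₁ := lqNorm p lam with hL1def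
  set L₂ := lqNorm p mu with hL2def
  set T₁ := supTerm 𝕜 p x with hT1def
  set T₂ := supTerm 𝕜 p y with hT2def
  have hT₁ : 0 ≤ T₁ := supTerm_nonneg hp0 x
  have hT₂ : 0 ≤ T₂ := supTerm_nonneg hp0 y
  set S₁ := T₁ ^ (1/p) with hS1def
  set S₂ := T₂ ^ (1/p) with hS2def
  have hS₁ : 0 ≤ S₁ := Real.rpow_nonneg hT₁ _
  have hS₂ : 0 ≤ S₂ := Real.rpow_nonneg hT₂ _
  set δ : ℝ := ε / (L₁ + L₂) with hδdef
  have hδ : 0 < δ := div_pos hε (by linarith)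
  have hSd₁ : 0 < S₁ + δ := by linarith
  have hSd₂ : 0 < S₂ + δ := by linarith
  set t₁ : ℝ := (S₁ + δ) ^ ((p-1)/p) * L₁ ^ (-(1/p)) with ht1def
  set t₂ : ℝ := (S₂ + δ) ^ ((p-1)/p) * L₂ ^ (-(1/p)) with ht2def
  have ht₁ : 0 < t₁ := mul_pos (Real.rpow_pos_of_pos hSd₁ _) (Real.rpow_pos_of_pos hL₁ _)
  have ht₂ : 0 < t₂ := mul_pos (Real.rpow_pos_of_pos hSd₂ _) (Real.rpow_pos_of_pos hL₂ _)
  set D : ℝ := (S₁ + δ) * L₁ + (S₂ + δ) * L₂ with hDdef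
  have hD : 0 < D := by positivity
  have hstep := sigmaNorm_add_le_of_reps hn hp hu hv ht₁ ht₂
  -- compute the lq norm of the appended scaled family
  have hlq : lqNorm p (Fin.append (fun j => ((t₁:ℝ):𝕜) * lam j) (fun j => ((t₂:ℝ):𝕜) * mu j))
      = D ^ ((p-1)/p) := by
    rw [lqNorm_pgt1 hp1]
    congr 1
    rw [Fin.sum_univ_add]
    simp only [Fin.append_left, Fin.append_right]
    have e₁ : ∀ j, ‖((t₁:ℝ):𝕜) * lam j‖ ^ (p/(p-1)) = t₁ ^ (p/(p-1)) * ‖lam j‖ ^ (p/(p-1)) :=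
      fun j => by
        rw [norm_mul, RCLike.norm_ofReal, abs_of_pos ht₁, Real.mul_rpow ht₁.le (norm_nonneg _)]
    have e₂ : ∀ j, ‖((t₂:ℝ):𝕜) * mu j‖ ^ (p/(p-1)) = t₂ ^ (p/(p-1)) * ‖mu j‖ ^ (p/(p-1)) :=
      fun j => by
        rw [norm_mul, RCLike.norm_ofReal, abs_of_pos ht₂, Real.mul_rpow ht₂.le (norm_nonneg _)]
    simp only [e₁, e₂]
    rw [← Finset.mul_sum, ← Finset.mul_sum, ← lq_pow_q hp1 lam, ← lq_pow_q hp1 mu]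
    rw [ht1def, ht2def, ← hL1def, ← hL2def]
    rw [rpow_aux1 hp1 hL₁ hSd₁, rpow_aux1 hp1 hL₂ hSd₂]
  -- bound the sup term
  have hW : (t₁⁻¹) ^ p * T₁ + (t₂⁻¹) ^ p * T₂ ≤ D := by
    have hTle₁ : T₁ ≤ (S₁ + δ) ^ p := by
      have hTS : T₁ = S₁ ^ p := by
        rw [hS1def, ← Real.rpow_mul hT₁, one_div, inv_mul_cancel₀ (ne_of_gt hp0),
          Real.rpow_one]
      rw [hTS]
      exact Real.rpow_le_rpow hS₁ (by linarith) hp0.le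
    have hTle₂ : T₂ ≤ (S₂ + δ) ^ p := by
      have hTS : T₂ = S₂ ^ p := by
        rw [hS2def, ← Real.rpow_mul hT₂, one_div, inv_mul_cancel₀ (ne_of_gt hp0),
          Real.rpow_one]
      rw [hTS]
      exact Real.rpow_le_rpow hS₂ (by linarith) hp0.le
    have b₁ := rpow_aux2 hp1 hL₁ hSd₁ hT₁ hTle₁
    have b₂ := rpow_aux2 hp1 hL₂ hSd₂ hT₂ hTle₂
    rw [ht1def, ht2def]
    rw [hDdef]
    exact add_le_add b₁ b₂
  -- put things together
  have hWnn : 0 ≤ (t₁⁻¹) ^ p * T₁ + (t₂⁻¹) ^ p * T₂ := by positivity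
  have hfinal : sigmaNorm p (u + v) ≤ D := by
    refine le_trans hstep ?_
    rw [hlq]
    calc D ^ ((p-1)/p) * ((t₁⁻¹) ^ p * T₁ + (t₂⁻¹) ^ p * T₂) ^ (1/p)
        ≤ D ^ ((p-1)/p) * D ^ (1/p) := by
          refine mul_le_mul_of_nonneg_left ?_ (Real.rpow_nonneg hD.le _)
          exact Real.rpow_le_rpow hWnn hW (by positivity)
    _ = D := by
          rw [← Real.rpow_add hD, show (p-1)/p + 1/p = 1 by field_simp; ring, Real.rpow_one]
  have hδe : δ * (L₁ + L₂) = ε := by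
    rw [hδdef]
    field_simp
  have hDval : D = L₁ * S₁ + L₂ * S₂ + ε := by
    rw [hDdef, ← hδe]; ring
  rw [hDval] at hfinal
  calc sigmaNorm p (u + v) ≤ L₁ * S₁ + L₂ * S₂ + ε := hfinal
  _ = L₁ * T₁ ^ (1/p) + L₂ * T₂ ^ (1/p) + ε := by rw [hS1def, hS2def]

end tri3

theorem sigmaNorm_seminorm' {𝕜 : Type*} [RCLike 𝕜] {n : ℕ} (hn : 1 ≤ n)
    (E : Fin n → Type*) [∀ i, NormedAddCommGroup (E i)] [∀ i, NormedSpace 𝕜 (E i)]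
    (p : ℝ) (hp : 1 ≤ p) :
    (∀ (c : 𝕜) (u : ⨂[𝕜] i, E i), sigmaNorm p (c • u) = ‖c‖ * sigmaNorm p u) ∧
    (∀ u v : ⨂[𝕜] i, E i, sigmaNorm p (u + v) ≤ sigmaNorm p u + sigmaNorm p v) := by
  have hn0 : 0 < n := hn
  have hp0 : 0 < p := by linarith
  constructor
  · exact fun c u => sigmaNorm_smul hp c u
  · intro u v
    have key : ∀ ru ∈ repSet p u, ∀ rv ∈ repSet p v, sigmaNorm p (u + v) ≤ ru + rv := by
      rintro ru ⟨m₁, lam, x, hu', rfl⟩ rv ⟨m₂, mu, y, hv', rfl⟩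
      have hnn₁ : 0 ≤ lqNorm p lam * supTerm 𝕜 p x ^ (1/p) :=
        mul_nonneg (lqNorm_nonneg hp lam) (Real.rpow_nonneg (supTerm_nonneg hp0 x) _)
      have hnn₂ : 0 ≤ lqNorm p mu * supTerm 𝕜 p y ^ (1/p) :=
        mul_nonneg (lqNorm_nonneg hp mu) (Real.rpow_nonneg (supTerm_nonneg hp0 y) _)
      rcases eq_or_lt_of_le (lqNorm_nonneg hp lam) with hL₁ | hL₁
      · have hz : u = 0 := by
          rw [hu']
          refine Finset.sum_eq_zero fun j _ => ?_
          rw [eq_zero_of_lqNorm_eq_zero hp hL₁.symm j, zero_smul]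
        rw [hz, zero_add]
        have h1 := sigmaNorm_le_of_mem hp (⟨m₂, mu, y, hv', rfl⟩ :
          lqNorm p mu * supTerm 𝕜 p y ^ (1/p) ∈ repSet p v)
        linarith
      rcases eq_or_lt_of_le (lqNorm_nonneg hp mu) with hL₂ | hL₂
      · have hz : v = 0 := by
          rw [hv']
          refine Finset.sum_eq_zero fun j _ => ?_
          rw [eq_zero_of_lqNorm_eq_zero hp hL₂.symm j, zero_smul]
        rw [hz, add_zero]
        have h1 := sigmaNorm_le_of_mem hp (⟨m₁, lam, x, hu', rfl⟩ :
          lqNorm p lam * supTerm 𝕜 p x ^ (1/p) ∈ repSet p u)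
        linarith
      rcases eq_or_lt_of_le hp with hp1 | hp1
      · subst hp1
        exact key_case_p1 hn0 hu' hv' hL₁ hL₂
      · exact le_of_forall_pos_le_add fun ε hε => key_case_pgt1 hn0 hp1 hu' hv' hL₁ hL₂ hε
    have h1 : ∀ rv ∈ repSet p v, sigmaNorm p (u + v) - rv ≤ sigmaNorm p u := by
      intro rv hrv
      refine le_csInf (repSet_nonempty hp u) fun ru hru => ?_
      have := key ru hru rv hrv
      linarith
    have h2 : sigmaNorm p (u + v) - sigmaNorm p u ≤ sigmaNorm p v := by
      refine le_csInf (repSet_nonempty hp v) fun rv hrv => ?_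
      have := h1 rv hrv
      linarith
    linarith

/-- `σ_p` is absolutely homogeneous and satisfies the triangle inequality, i.e. it is a
seminorm on `E₁ ⊗ ⋯ ⊗ Eₙ`. -/
theorem sigmaNorm_seminorm {𝕜 : Type*} [RCLike 𝕜] {n : ℕ} (hn : 1 ≤ n)
    (E : Fin n → Type*) [∀ i, NormedAddCommGroup (E i)] [∀ i, NormedSpace 𝕜 (E i)]
    (p : ℝ) (hp : 1 ≤ p) :
    (∀ (c : 𝕜) (u : ⨂[𝕜] i, E i), sigmaNorm p (c • u) = ‖c‖ * sigmaNorm p u) ∧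
    (∀ u v : ⨂[𝕜] i, E i, sigmaNorm p (u + v) ≤ sigmaNorm p u + sigmaNorm p v) := by
  exact sigmaNorm_seminorm' hn E p hp
end

section
/- Let p ≥ 1 and let E₁,…,Eₙ be normed spaces over 𝕂. Then for every u ∈ E₁⊗⋯⊗Eₙ⊗𝕂, one has σ_p^{n+1}(u) = σ_p^n(ψ(u)); consequently the canonical map ψ : (E₁⊗⋯⊗Eₙ⊗𝕂, σ_p^{n+1}) → (E₁⊗⋯⊗Eₙ, σ_p^n) is an isometric isomorphism (the tensor norm σ_p is smooth). -/
open scoped TensorProduct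
open PiTensorProduct

/-- `sup Σ_j (|φ₁(x_{1,j}) ⋯ φₙ(x_{n,j})| · |φ_{n+1}(y_j)|)^p`, the sup being over
functionals in the unit balls of `E₁', …, Eₙ'` and of `𝕜'`. -/
noncomputable def supTerm' (𝕜 : Type*) [RCLike 𝕜] {n : ℕ} {E : Fin n → Type*}
    [∀ i, NormedAddCommGroup (E i)] [∀ i, NormedSpace 𝕜 (E i)]
    (p : ℝ) {m : ℕ} (x : Fin m → Π i, E i) (y : Fin m → 𝕜) : ℝ :=
  ⨆ Φ : {Φ : (Π i, E i →L[𝕜] 𝕜) × (𝕜 →L[𝕜] 𝕜) // (∀ i, ‖Φ.1 i‖ ≤ 1) ∧ ‖Φ.2‖ ≤ 1},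
    ∑ j, ((∏ i, ‖Φ.1.1 i (x j i)‖) * ‖Φ.1.2 (y j)‖) ^ p

/-- The tensor norm `σ_p^{n+1}` on `E₁ ⊗ ⋯ ⊗ Eₙ ⊗ 𝕜`, treating `𝕜` (with the absolute
value) as the `(n+1)`-st normed space. -/
noncomputable def sigmaNorm' {𝕜 : Type*} [RCLike 𝕜] {n : ℕ} {E : Fin n → Type*}
    [∀ i, NormedAddCommGroup (E i)] [∀ i, NormedSpace 𝕜 (E i)]
    (p : ℝ) (z : (⨂[𝕜] i, E i) ⊗[𝕜] 𝕜) : ℝ :=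
  sInf { r : ℝ | ∃ (m : ℕ) (lam : Fin m → 𝕜) (x : Fin m → Π i, E i) (y : Fin m → 𝕜),
    z = (∑ j, lam j • ((⨂ₜ[𝕜] i, x j i) ⊗ₜ[𝕜] y j)) ∧
    r = lqNorm p lam * (supTerm' 𝕜 p x y) ^ (1/p) }


section Aux

variable {𝕜 : Type*} [RCLike 𝕜] {n : ℕ} {E : Fin n → Type*}
    [∀ i, NormedAddCommGroup (E i)] [∀ i, NormedSpace 𝕜 (E i)]

private lemma prod_update_smul (φ : Π i, E i →L[𝕜] 𝕜) (v : Π i, E i) (c : 𝕜) (i₀ : Fin n) :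
    ∏ i, ‖φ i (Function.update v i₀ (c • v i₀) i)‖ = ‖c‖ * ∏ i, ‖φ i (v i)‖ := by
  have h : ∀ i : Fin n, ‖φ i (Function.update v i₀ (c • v i₀) i)‖ =
      Function.update (fun i => ‖φ i (v i)‖) i₀ (‖c‖ * ‖φ i₀ (v i₀)‖) i := by
    intro i
    rcases eq_or_ne i i₀ with rfl | hne
    · simp [norm_smul]
    · simp [Function.update_of_ne hne]
  calc ∏ i, ‖φ i (Function.update v i₀ (c • v i₀) i)‖
      = ∏ i, Function.update (fun i => ‖φ i (v i)‖) i₀ (‖c‖ * ‖φ i₀ (v i₀)‖) i :=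
        Finset.prod_congr rfl fun i _ => h i
    _ = (‖c‖ * ‖φ i₀ (v i₀)‖) * ∏ i ∈ Finset.univ \ {i₀}, ‖φ i (v i)‖ :=
        Finset.prod_update_of_mem (Finset.mem_univ i₀) _ _
    _ = ‖c‖ * ∏ i, ‖φ i (v i)‖ := by
        rw [mul_assoc, Finset.sdiff_singleton_eq_erase]
        congr 1
        exact Finset.mul_prod_erase Finset.univ (fun i => ‖φ i (v i)‖) (Finset.mem_univ i₀)

private lemma norm_apply_le {F : Type*} [NormedAddCommGroup F] [NormedSpace 𝕜 F]
    (φ : F →L[𝕜] 𝕜) (hφ : ‖φ‖ ≤ 1) (v : F) : ‖φ v‖ ≤ ‖v‖ :=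
  le_trans (φ.le_opNorm v) (by
    calc ‖φ‖ * ‖v‖ ≤ 1 * ‖v‖ := mul_le_mul_of_nonneg_right hφ (norm_nonneg v)
    _ = ‖v‖ := one_mul _)

private lemma supTerm_bdd (p : ℝ) (hp0 : 0 ≤ p) {m : ℕ} (x : Fin m → Π i, E i) :
    BddAbove (Set.range fun φ : {φ : Π i, E i →L[𝕜] 𝕜 // ∀ i, ‖φ i‖ ≤ 1} =>
      ∑ j, (∏ i, ‖φ.1 i (x j i)‖) ^ p) := by
  refine ⟨∑ j, (∏ i, ‖x j i‖) ^ p, ?_⟩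
  rintro r ⟨φ, rfl⟩
  refine Finset.sum_le_sum fun j _ => ?_
  refine Real.rpow_le_rpow (Finset.prod_nonneg fun i _ => norm_nonneg _) ?_ hp0
  exact Finset.prod_le_prod (fun i _ => norm_nonneg _)
    (fun i _ => norm_apply_le (φ.1 i) (φ.2 i) (x j i))

private lemma supTerm'_bdd (p : ℝ) (hp0 : 0 ≤ p) {m : ℕ} (x : Fin m → Π i, E i)
    (y : Fin m → 𝕜) :
    BddAbove (Set.range fun Φ : {Φ : (Π i, E i →L[𝕜] 𝕜) × (𝕜 →L[𝕜] 𝕜) //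
        (∀ i, ‖Φ.1 i‖ ≤ 1) ∧ ‖Φ.2‖ ≤ 1} =>
      ∑ j, ((∏ i, ‖Φ.1.1 i (x j i)‖) * ‖Φ.1.2 (y j)‖) ^ p) := by
  refine ⟨∑ j, ((∏ i, ‖x j i‖) * ‖y j‖) ^ p, ?_⟩
  rintro r ⟨Φ, rfl⟩
  refine Finset.sum_le_sum fun j _ => ?_
  refine Real.rpow_le_rpow
    (mul_nonneg (Finset.prod_nonneg fun i _ => norm_nonneg _) (norm_nonneg _)) ?_ hp0
  refine mul_le_mul ?_ (norm_apply_le Φ.1.2 Φ.2.2 (y j)) (norm_nonneg _)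
    (Finset.prod_nonneg fun i _ => norm_nonneg _)
  exact Finset.prod_le_prod (fun i _ => norm_nonneg _)
    (fun i _ => norm_apply_le (Φ.1.1 i) (Φ.2.1 i) (x j i))

private lemma supTerm'_eq (p : ℝ) (hp0 : 0 ≤ p) (i₀ : Fin n) {m : ℕ}
    (x : Fin m → Π i, E i) (y : Fin m → 𝕜) :
    supTerm' 𝕜 p x y = supTerm 𝕜 p (fun j => Function.update (x j) i₀ (y j • x j i₀)) := by
  have hprod : ∀ (φ : Π i, E i →L[𝕜] 𝕜) (j : Fin m),
      ∏ i, ‖φ i (Function.update (x j) i₀ (y j • x j i₀) i)‖ = ‖y j‖ * ∏ i, ‖φ i (x j i)‖ :=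
    fun φ j => prod_update_smul φ (x j) (y j) i₀
  haveI : Nonempty {φ : Π i, E i →L[𝕜] 𝕜 // ∀ i, ‖φ i‖ ≤ 1} :=
    ⟨⟨fun _ => 0, fun i => by simp⟩⟩
  haveI : Nonempty {Φ : (Π i, E i →L[𝕜] 𝕜) × (𝕜 →L[𝕜] 𝕜) //
      (∀ i, ‖Φ.1 i‖ ≤ 1) ∧ ‖Φ.2‖ ≤ 1} :=
    ⟨⟨(fun _ => 0, 0), fun i => by simp, by simp⟩⟩
  apply le_antisymm
  · refine ciSup_le fun Φ => ?_
    refine le_trans ?_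
      (le_ciSup (supTerm_bdd p hp0 (fun j => Function.update (x j) i₀ (y j • x j i₀)))
        ⟨Φ.1.1, Φ.2.1⟩)
    refine Finset.sum_le_sum fun j _ => ?_
    refine Real.rpow_le_rpow
      (mul_nonneg (Finset.prod_nonneg fun i _ => norm_nonneg _) (norm_nonneg _)) ?_ hp0
    rw [hprod Φ.1.1 j, mul_comm (‖y j‖)]
    exact mul_le_mul_of_nonneg_left (norm_apply_le Φ.1.2 Φ.2.2 (y j))
      (Finset.prod_nonneg fun i _ => norm_nonneg _)
  · refine ciSup_le fun φ => ?_
    refine le_trans ?_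
      (le_ciSup (supTerm'_bdd p hp0 x y)
        ⟨(φ.1, ContinuousLinearMap.id 𝕜 𝕜), φ.2, ContinuousLinearMap.norm_id_le⟩)
    refine le_of_eq (Finset.sum_congr rfl fun j _ => ?_)
    rw [hprod φ.1 j]
    simp [mul_comm]

end Aux

/-- The tensor norm `σ_p` is smooth: `σ_p^{n+1}(u) = σ_p^n(ψ(u))`, so the canonical map
`ψ : (E₁ ⊗ ⋯ ⊗ Eₙ ⊗ 𝕜, σ_p^{n+1}) → (E₁ ⊗ ⋯ ⊗ Eₙ, σ_p^n)` is an isometric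
isomorphism. -/
theorem sigmaNorm_smooth {𝕜 : Type*} [RCLike 𝕜] {n : ℕ} (hn : 1 ≤ n)
    (E : Fin n → Type*) [∀ i, NormedAddCommGroup (E i)] [∀ i, NormedSpace 𝕜 (E i)]
    (p : ℝ) (hp : 1 ≤ p) (u : (⨂[𝕜] i, E i) ⊗[𝕜] 𝕜) :
    sigmaNorm' p u = sigmaNorm p (TensorProduct.rid 𝕜 (⨂[𝕜] i, E i) u) := by
  have hp0 : 0 ≤ p := le_trans zero_le_one hp
  have i₀ : Fin n := ⟨0, hn⟩
  unfold sigmaNorm' sigmaNorm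
  apply congrArg sInf
  ext r
  constructor
  · rintro ⟨m, lam, x, y, rfl, rfl⟩
    refine ⟨m, lam, fun j => Function.update (x j) i₀ (y j • x j i₀), ?_, ?_⟩
    · rw [map_sum]
      refine Finset.sum_congr rfl fun j _ => ?_
      rw [map_smul, TensorProduct.rid_tmul,
        MultilinearMap.map_update_smul (PiTensorProduct.tprod 𝕜) (x j) i₀ (y j) (x j i₀), Function.update_eq_self]
    · rw [supTerm'_eq p hp0 i₀ x y]
  · rintro ⟨m, lam, x, hv, rfl⟩
    refine ⟨m, lam, x, fun _ => (1 : 𝕜), ?_, ?_⟩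
    · apply (TensorProduct.rid 𝕜 (⨂[𝕜] i, E i)).injective
      rw [hv, map_sum]
      refine Finset.sum_congr rfl fun j _ => ?_
      rw [map_smul, TensorProduct.rid_tmul, one_smul]
    · rw [supTerm'_eq p hp0 i₀ x (fun _ => (1 : 𝕜))]
      simp [Function.update_eq_self]
end

section
/- Let p ≥ 1, let E₁,…,Eₙ be normed spaces over 𝕂, and let A : E₁×⋯×Eₙ → 𝕂 be an n-linear form such that, for some C ≥ 0, ( Σ_{j=1}^m |A(x_{1,j},…,x_{n,j})|^p )^{1/p} ≤ C · ( sup_{φ_l ∈ E_l', ‖φ_l‖ ≤ 1} Σ_{j=1}^m |φ₁(x_{1,j})⋯φₙ(x_{n,j})|^p )^{1/p} for every m ∈ ℕ and all x_{l,j} ∈ E_l. Then the linearization f = A_L satisfies |f(u)| ≤ C·σ_p(u) for every u ∈ E₁⊗⋯⊗Eₙ. (Together with the converse direction, this shows that the dual of (E₁⊗⋯⊗Eₙ, σ_p) is isometrically the space of p-semi-integral n-linear forms.) -/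
open scoped TensorProduct
open PiTensorProduct

/-- If an `n`-linear form `A` is `p`-semi-integral with constant `C` (in the sense of the
displayed inequality), then its linearization `f = A_L` satisfies `|f(u)| ≤ C·σ_p(u)`. -/
theorem sigma_bounded_of_semiIntegral {𝕜 : Type*} [RCLike 𝕜] {n : ℕ} (hn : 1 ≤ n)
    (E : Fin n → Type*) [∀ i, NormedAddCommGroup (E i)] [∀ i, NormedSpace 𝕜 (E i)]
    (p : ℝ) (hp : 1 ≤ p) (C : ℝ) (hC : 0 ≤ C)
    (A : MultilinearMap 𝕜 E 𝕜)
    (hA : ∀ (m : ℕ) (x : Fin m → Π i, E i),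
      (∑ j, ‖A (x j)‖ ^ p) ^ (1/p) ≤ C * (supTerm 𝕜 p x) ^ (1/p)) :
    ∀ u : ⨂[𝕜] i, E i, ‖PiTensorProduct.lift A u‖ ≤ C * sigmaNorm p u := by
  have hp0 : (0:ℝ) < p := lt_of_lt_of_le zero_lt_one hp
  -- supTerm is nonneg
  have hsup_nonneg : ∀ (m : ℕ) (x : Fin m → Π i, E i), 0 ≤ supTerm 𝕜 p x := by
    intro m x
    apply Real.iSup_nonneg
    intro φ
    exact Finset.sum_nonneg fun j _ => Real.rpow_nonneg
      (Finset.prod_nonneg fun i _ => norm_nonneg _) _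
  -- the key per-representation bound
  have key : ∀ (m : ℕ) (lam : Fin m → 𝕜) (x : Fin m → Π i, E i),
      ‖PiTensorProduct.lift A (∑ j, lam j • ⨂ₜ[𝕜] i, x j i)‖ ≤
        C * (lqNorm p lam * (supTerm 𝕜 p x) ^ (1/p)) := by
    intro m lam x
    have hfu : PiTensorProduct.lift A (∑ j, lam j • ⨂ₜ[𝕜] i, x j i)
        = ∑ j, lam j • A (x j) := by
      rw [map_sum]
      simp [PiTensorProduct.lift.tprod]
    have h1 : ‖PiTensorProduct.lift A (∑ j, lam j • ⨂ₜ[𝕜] i, x j i)‖ ≤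
        ∑ j, ‖lam j‖ * ‖A (x j)‖ := by
      rw [hfu]
      refine (norm_sum_le _ _).trans (le_of_eq ?_)
      simp [norm_smul]
    have hAx := hA m x
    rcases eq_or_lt_of_le hp with hp1 | hp1
    · -- p = 1
      have hp1' : p = 1 := hp1.symm
      subst hp1'
      have hM : 0 ≤ ⨆ j, ‖lam j‖ := Real.iSup_nonneg fun j => norm_nonneg _
      have hle : ∀ j : Fin m, ‖lam j‖ ≤ ⨆ j, ‖lam j‖ := fun j =>
        le_ciSup (f := fun j => ‖lam j‖) (Set.Finite.bddAbove (Set.finite_range _)) j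
      have h2 : ∑ j, ‖lam j‖ * ‖A (x j)‖ ≤ (⨆ j, ‖lam j‖) * ∑ j, ‖A (x j)‖ := by
        rw [Finset.mul_sum]
        exact Finset.sum_le_sum fun j _ =>
          mul_le_mul_of_nonneg_right (hle j) (norm_nonneg _)
      have h3 : ∑ j, ‖A (x j)‖ ≤ C * (supTerm 𝕜 1 x) ^ ((1:ℝ)/1) := by
        have := hAx
        simpa [Real.rpow_one] using this
      simp only [lqNorm, if_pos rfl]
      calc ‖PiTensorProduct.lift A (∑ j, lam j • ⨂ₜ[𝕜] i, x j i)‖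
          ≤ ∑ j, ‖lam j‖ * ‖A (x j)‖ := h1
        _ ≤ (⨆ j, ‖lam j‖) * ∑ j, ‖A (x j)‖ := h2
        _ ≤ (⨆ j, ‖lam j‖) * (C * (supTerm 𝕜 1 x) ^ ((1:ℝ)/1)) :=
            mul_le_mul_of_nonneg_left h3 hM
        _ = C * ((⨆ j, ‖lam j‖) * (supTerm 𝕜 1 x) ^ ((1:ℝ)/1)) := by ring
    · -- 1 < p
      have hpne : p ≠ 1 := ne_of_gt hp1
      have hq : Real.HolderConjugate (p / (p - 1)) p := by
        refine Real.HolderTriple.symm ((Real.holderConjugate_iff_eq_conjExponent hp1).2 ?_)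
        have h1p : p - 1 ≠ 0 := sub_ne_zero.2 (ne_of_gt hp1)
        field_simp
      have holder := Real.inner_le_Lp_mul_Lq_of_nonneg (Finset.univ (α := Fin m))
        (f := fun j => ‖lam j‖) (g := fun j => ‖A (x j)‖) hq
        (fun j _ => norm_nonneg _) (fun j _ => norm_nonneg _)
      have hLq : (∑ j, ‖lam j‖ ^ (p / (p - 1))) ^ (1 / (p / (p - 1))) = lqNorm p lam := by
        simp only [lqNorm, if_neg hpne]
        congr 1
        rw [one_div_div]
      have hL_nonneg : 0 ≤ lqNorm p lam := by
        rw [← hLq]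
        exact Real.rpow_nonneg (Finset.sum_nonneg fun j _ => Real.rpow_nonneg (norm_nonneg _) _) _
      calc ‖PiTensorProduct.lift A (∑ j, lam j • ⨂ₜ[𝕜] i, x j i)‖
          ≤ ∑ j, ‖lam j‖ * ‖A (x j)‖ := h1
        _ ≤ (∑ j, ‖lam j‖ ^ (p / (p - 1))) ^ (1 / (p / (p - 1))) *
              (∑ j, ‖A (x j)‖ ^ p) ^ (1/p) := holder
        _ = lqNorm p lam * (∑ j, ‖A (x j)‖ ^ p) ^ (1/p) := by rw [hLq]
        _ ≤ lqNorm p lam * (C * (supTerm 𝕜 p x) ^ (1/p)) :=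
            mul_le_mul_of_nonneg_left hAx hL_nonneg
        _ = C * (lqNorm p lam * (supTerm 𝕜 p x) ^ (1/p)) := by ring
  -- every element has a representation
  have exists_repr : ∀ u : ⨂[𝕜] i, E i, ∃ (m : ℕ) (lam : Fin m → 𝕜)
      (x : Fin m → Π i, E i), u = (∑ j, lam j • ⨂ₜ[𝕜] i, x j i) := by
    intro u
    induction u using PiTensorProduct.induction_on with
    | smul_tprod r f => exact ⟨1, fun _ => r, fun _ => f, by simp⟩
    | add v w hv hw =>
      obtain ⟨m₁, l₁, x₁, h₁⟩ := hv
      obtain ⟨m₂, l₂, x₂, h₂⟩ := hw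
      refine ⟨m₁ + m₂, Fin.append l₁ l₂, Fin.append x₁ x₂, ?_⟩
      rw [Fin.sum_univ_add]
      simp only [Fin.append_left, Fin.append_right]
      rw [h₁, h₂]
  intro u
  obtain ⟨m, lam, x, hu⟩ := exists_repr u
  set S : Set ℝ := { r : ℝ | ∃ (m : ℕ) (lam : Fin m → 𝕜) (x : Fin m → Π i, E i),
    u = (∑ j, lam j • ⨂ₜ[𝕜] i, x j i) ∧
    r = lqNorm p lam * (supTerm 𝕜 p x) ^ (1/p) } with hS
  have hmem : lqNorm p lam * (supTerm 𝕜 p x) ^ (1/p) ∈ S := ⟨m, lam, x, hu, rfl⟩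
  have hne : S.Nonempty := ⟨_, hmem⟩
  have hbound : ∀ r ∈ S, ‖PiTensorProduct.lift A u‖ ≤ C * r := by
    rintro r ⟨m', lam', x', hu', rfl⟩
    rw [hu']
    exact key m' lam' x'
  rcases eq_or_lt_of_le hC with hC0 | hC0
  · have := hbound _ hmem
    rw [← hC0] at this ⊢
    simpa using this
  · have hdiv : ‖PiTensorProduct.lift A u‖ / C ≤ sInf S := by
      refine le_csInf hne fun r hr => ?_
      rw [div_le_iff₀ hC0]
      calc ‖PiTensorProduct.lift A u‖ ≤ C * r := hbound r hr
        _ = r * C := mul_comm _ _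
    calc ‖PiTensorProduct.lift A u‖ = C * (‖PiTensorProduct.lift A u‖ / C) := by
          field_simp
      _ ≤ C * sInf S := mul_le_mul_of_nonneg_left hdiv hC
      _ = C * sigmaNorm p u := rfl
end
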